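/- Let X be a Banach space and M, N closed subspaces of X. Suppose there exist an isomorphism U from M onto N with U restricted to M ∩ N equal to the identity, and a constant C ≥ 1 such that ‖Ux + y‖ ≤ C‖x + y‖ for all x ∈ M, y ∈ N. Then M and N have a common complement in the closure of M + N. -/

import Mathlib

open Submodule LinearMap

/-- Construction of the bounded map `Q` on the closure of `M + N` with `Q(x+y) = Ux + y`. -/
theorem exists_Q_aux {X : Type*} [NormedAddCommGroup X] [NormedSpace ℝ X] [CompleteSpace X]
    (M N : Submodule ℝ X) (hN : IsClosed (N : Set X))
    (U : M ≃L[ℝ] N) (C : ℝ) (hC : 1 ≤ C)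
    (hid : ∀ x : M, (x : X) ∈ N → (U x : X) = (x : X))
    (hineq : ∀ (x : M) (y : N), ‖(U x : X) + (y : X)‖ ≤ C * ‖(x : X) + (y : X)‖) :
    ∃ Q : (M ⊔ N).topologicalClosure →L[ℝ] X,
      (∀ x : M, ∀ h : (x : X) ∈ (M ⊔ N).topologicalClosure, Q ⟨x, h⟩ = (U x : X)) ∧
      (∀ y : N, ∀ h : (y : X) ∈ (M ⊔ N).topologicalClosure, Q ⟨y, h⟩ = (y : X)) ∧
      (∀ z, Q z ∈ N) := by
  classical
  set P : Submodule ℝ X := M ⊔ N with hP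
  set Yc : Submodule ℝ X := P.topologicalClosure with hYc
  -- the addition map
  set a : (M × N) →ₗ[ℝ] X := M.subtype.coprod N.subtype with ha
  have hrange : LinearMap.range a = P := by
    rw [ha, LinearMap.range_coprod, Submodule.range_subtype, Submodule.range_subtype]
  set abar : (M × N) →ₗ[ℝ] P :=
    a.codRestrict P (fun v => hrange ▸ LinearMap.mem_range_self a v) with habar
  have habar_surj : Function.Surjective abar := by
    rintro ⟨p, hp⟩
    rw [← hrange] at hp
    obtain ⟨v, hv⟩ := hp
    exact ⟨v, Subtype.ext hv⟩
  set φ : (M × N) →ₗ[ℝ] X :=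
    (N.subtype.comp (U : M →ₗ[ℝ] N)).coprod N.subtype with hφ
  have hφ_apply : ∀ v : M × N, φ v = (U v.1 : X) + (v.2 : X) := fun v => rfl
  have hker : LinearMap.ker abar ≤ LinearMap.ker φ := by
    rintro ⟨x, y⟩ hv
    have h0 : a (x, y) = 0 := by
      have := Subtype.ext_iff.mp (LinearMap.mem_ker.mp hv)
      simpa [habar] using this
    have hxy : (x : X) + (y : X) = 0 := by simpa [ha] using h0
    have hxN : (x : X) ∈ N := by
      rw [eq_neg_of_add_eq_zero_left hxy]
      exact N.neg_mem y.2
    have hUx : (U x : X) = (x : X) := hid x hxN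
    rw [LinearMap.mem_ker, hφ_apply, hUx, hxy]
  set e : ((M × N) ⧸ LinearMap.ker abar) ≃ₗ[ℝ] P :=
    abar.quotKerEquivOfSurjective habar_surj with he
  set ψ : P →ₗ[ℝ] X := ((LinearMap.ker abar).liftQ φ hker).comp (e.symm : P →ₗ[ℝ] _) with hψ
  have he_mk : ∀ v : M × N, e (Submodule.Quotient.mk v) = abar v := fun v => rfl
  have hψ_abar : ∀ v : M × N, ψ (abar v) = φ v := by
    intro v
    rw [hψ]
    simp only [LinearMap.coe_comp, Function.comp_apply, LinearEquiv.coe_coe]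
    rw [← he_mk v, LinearEquiv.symm_apply_apply, Submodule.liftQ_apply]
  have hbound : ∀ p : P, ‖ψ p‖ ≤ C * ‖p‖ := by
    intro p
    obtain ⟨v, hv⟩ := habar_surj p
    rw [← hv, hψ_abar v, hφ_apply]
    have : ‖abar v‖ = ‖(v.1 : X) + (v.2 : X)‖ := rfl
    rw [this]
    exact hineq v.1 v.2
  set Ψ : P →L[ℝ] X := ψ.mkContinuous C hbound with hΨ
  have hΨ_apply : ∀ p : P, Ψ p = ψ p := fun p => rfl
  -- the inclusion P → Yc
  set ι : P →L[ℝ] Yc :=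
    { toLinearMap := Submodule.inclusion P.le_topologicalClosure
      cont := continuous_inclusion P.le_topologicalClosure } with hι
  have hι_apply : ∀ p : P, ((ι p : Yc) : X) = (p : X) := fun p => rfl
  have hι_isom : Isometry ι := fun x y => rfl
  have hι_dense : DenseRange ι := by
    intro y
    rw [closure_subtype]
    have himg : (Subtype.val '' Set.range ι : Set X) = (P : Set X) := by
      ext z
      constructor
      · rintro ⟨w, ⟨p, rfl⟩, rfl⟩
        exact p.2
      · intro hz
        exact ⟨ι ⟨z, hz⟩, ⟨⟨z, hz⟩, rfl⟩, rfl⟩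
    rw [himg]
    have : (y : X) ∈ (P.topologicalClosure : Set X) := y.2
    rwa [Submodule.topologicalClosure_coe] at this
  set Q : Yc →L[ℝ] X := Ψ.extend ι with hQ
  have hQι : ∀ p : P, Q (ι p) = Ψ p := fun p =>
    ContinuousLinearMap.extend_eq Ψ hι_dense hι_isom.isUniformInducing p
  refine ⟨Q, ?_, ?_, ?_⟩
  · intro x h
    have hxP : (x : X) ∈ P := le_sup_left (α := Submodule ℝ X) x.2
    have h1 : (⟨(x : X), h⟩ : Yc) = ι ⟨(x : X), hxP⟩ := Subtype.ext rfl
    have h2 : abar (x, 0) = ⟨(x : X), hxP⟩ := by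
      apply Subtype.ext
      simp [habar, ha]
    rw [h1, hQι, hΨ_apply, ← h2, hψ_abar, hφ_apply]
    simp
  · intro y h
    have hyP : (y : X) ∈ P := le_sup_right (α := Submodule ℝ X) y.2
    have h1 : (⟨(y : X), h⟩ : Yc) = ι ⟨(y : X), hyP⟩ := Subtype.ext rfl
    have h2 : abar (0, y) = ⟨(y : X), hyP⟩ := by
      apply Subtype.ext
      simp [habar, ha]
    rw [h1, hQι, hΨ_apply, ← h2, hψ_abar, hφ_apply]
    simp
  · have hsub : Set.range ι ⊆ Q ⁻¹' (N : Set X) := by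
      rintro _ ⟨p, rfl⟩
      obtain ⟨v, hv⟩ := habar_surj p
      have : Q (ι p) = (U v.1 : X) + (v.2 : X) := by
        rw [hQι, hΨ_apply, ← hv, hψ_abar, hφ_apply]
      simp only [Set.mem_preimage, SetLike.mem_coe, this]
      exact N.add_mem (U v.1).2 v.2.2
    have hcl : closure (Set.range ι) ⊆ Q ⁻¹' (N : Set X) :=
      closure_minimal hsub (hN.preimage Q.continuous)
    exact fun z => hcl (hι_dense z)

theorem stmt_10 {X : Type*} [NormedAddCommGroup X] [NormedSpace ℝ X] [CompleteSpace X]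
    (M N : Submodule ℝ X) (hM : IsClosed (M : Set X)) (hN : IsClosed (N : Set X))
    (U : M ≃L[ℝ] N) (C : ℝ) (hC : 1 ≤ C)
    (hid : ∀ x : M, (x : X) ∈ N → (U x : X) = (x : X))
    (hineq : ∀ (x : M) (y : N), ‖(U x : X) + (y : X)‖ ≤ C * ‖(x : X) + (y : X)‖) :
    ∃ K : Submodule ℝ X, IsClosed (K : Set X) ∧ K ≤ (M ⊔ N).topologicalClosure ∧
      M ⊓ K = ⊥ ∧ M ⊔ K = (M ⊔ N).topologicalClosure ∧
      N ⊓ K = ⊥ ∧ N ⊔ K = (M ⊔ N).topologicalClosure := by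
  classical
  obtain ⟨Q, hQM, hQN, hQrange⟩ := exists_Q_aux M N hN U C hC hid hineq
  have hMY : M ≤ (M ⊔ N).topologicalClosure :=
    le_trans le_sup_left (M ⊔ N).le_topologicalClosure
  have hNY : N ≤ (M ⊔ N).topologicalClosure :=
    le_trans le_sup_right (M ⊔ N).le_topologicalClosure
  set K : Submodule ℝ X := (LinearMap.ker (Q : (M ⊔ N).topologicalClosure →ₗ[ℝ] X)).map (M ⊔ N).topologicalClosure.subtype with hK
  have hKmem : ∀ z : X, z ∈ K ↔ ∃ h : z ∈ (M ⊔ N).topologicalClosure, Q ⟨z, h⟩ = 0 := by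
    intro z
    constructor
    · rintro ⟨w, hw, rfl⟩
      exact ⟨w.2, by simpa using hw⟩
    · rintro ⟨h, hz⟩
      exact ⟨⟨z, h⟩, hz, rfl⟩
  have hKY : K ≤ (M ⊔ N).topologicalClosure := map_subtype_le _ _
  refine ⟨K, ?_, hKY, ?_, ?_, ?_, ?_⟩
  · -- closedness
    have h1 : IsClosed (((M ⊔ N).topologicalClosure : Submodule ℝ X) : Set X) :=
      Submodule.isClosed_topologicalClosure _
    have h2 : IsClosed ((LinearMap.ker (Q : (M ⊔ N).topologicalClosure →ₗ[ℝ] X) :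
        Submodule ℝ (M ⊔ N).topologicalClosure) : Set ((M ⊔ N).topologicalClosure)) :=
      IsClosed.preimage Q.continuous isClosed_singleton
    have h3 : (K : Set X) = Subtype.val '' ((LinearMap.ker (Q : (M ⊔ N).topologicalClosure →ₗ[ℝ] X) :
        Submodule ℝ (M ⊔ N).topologicalClosure) : Set ((M ⊔ N).topologicalClosure)) := rfl
    rw [h3]
    exact h1.isClosedEmbedding_subtypeVal.isClosedMap _ h2
  · -- M ⊓ K = ⊥
    rw [eq_bot_iff]
    rintro z ⟨hzM, hzK⟩
    obtain ⟨h, hz0⟩ := (hKmem z).mp hzK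
    have h1 : Q ⟨z, h⟩ = (U ⟨z, hzM⟩ : X) := hQM ⟨z, hzM⟩ h
    have h2 : (U ⟨z, hzM⟩ : X) = 0 := h1.symm.trans hz0
    have hz : (⟨z, hzM⟩ : M) = 0 := by
      apply U.injective
      apply Subtype.ext
      simpa using h2
    simpa using Subtype.ext_iff.mp hz
  · -- M ⊔ K = closure
    apply le_antisymm (sup_le hMY hKY)
    intro z hz
    have hQz : Q ⟨z, hz⟩ ∈ N := hQrange ⟨z, hz⟩
    set x : M := U.symm ⟨Q ⟨z, hz⟩, hQz⟩ with hx
    have hUx : (U x : X) = Q ⟨z, hz⟩ := by rw [hx, U.apply_symm_apply]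
    have hxY : (x : X) ∈ (M ⊔ N).topologicalClosure := hMY x.2
    have hkey : z - (x : X) ∈ K := by
      rw [hKmem]
      refine ⟨Submodule.sub_mem _ hz hxY, ?_⟩
      have hsplit : (⟨z - (x : X), Submodule.sub_mem _ hz hxY⟩ :
          (M ⊔ N).topologicalClosure) = ⟨z, hz⟩ - ⟨(x : X), hxY⟩ := rfl
      rw [hsplit, map_sub]
      have h1 : Q ⟨(x : X), hxY⟩ = (U x : X) := hQM x hxY
      rw [h1, hUx, sub_self]
    exact Submodule.mem_sup.mpr ⟨(x : X), x.2, z - (x : X), hkey, by abel⟩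
  · -- N ⊓ K = ⊥
    rw [eq_bot_iff]
    rintro z ⟨hzN, hzK⟩
    obtain ⟨h, hz0⟩ := (hKmem z).mp hzK
    have h1 : Q ⟨z, h⟩ = z := hQN ⟨z, hzN⟩ h
    have : z = 0 := h1.symm.trans hz0
    simp [this]
  · -- N ⊔ K = closure
    apply le_antisymm (sup_le hNY hKY)
    intro z hz
    have hQz : Q ⟨z, hz⟩ ∈ N := hQrange ⟨z, hz⟩
    have hyY : Q ⟨z, hz⟩ ∈ (M ⊔ N).topologicalClosure := hNY hQz
    have hkey : z - Q ⟨z, hz⟩ ∈ K := by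
      rw [hKmem]
      refine ⟨Submodule.sub_mem _ hz hyY, ?_⟩
      have hsplit : (⟨z - Q ⟨z, hz⟩, Submodule.sub_mem _ hz hyY⟩ :
          (M ⊔ N).topologicalClosure) = ⟨z, hz⟩ - ⟨Q ⟨z, hz⟩, hyY⟩ := rfl
      rw [hsplit, map_sub]
      have h1 : Q ⟨Q ⟨z, hz⟩, hyY⟩ = Q ⟨z, hz⟩ := hQN ⟨Q ⟨z, hz⟩, hQz⟩ hyY
      rw [h1, sub_self]
    exact Submodule.mem_sup.mpr ⟨Q ⟨z, hz⟩, hQz, z - Q ⟨z, hz⟩, hkey, by abel⟩
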